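/- Weak merge probability decomposition: let P be a probability measure on traces and C₁ = (A₁, G₁), C₂ = (A₂, G₂) contracts. If P(τ ⊨ C₁ | τ ∈ A₁) ≥ p₁ (when P(A₁) > 0) and P(τ ⊨ C₂ | τ ∉ A₁) ≥ p₂ (when P(A₁) < 1), then P(τ ⊨ C₁ ⋈ C₂) ≥ p₁·P(A₁) + p₂·(1 − P(A₁)), where C₁ ⋈ C₂ = (A₁ ∨ A₂, G₁ ∨ G₂ ∨ ¬(A₁ ∨ A₂)). -/

import Mathlib

open MeasureTheory ProbabilityTheory

/-- Weak merge probability decomposition: if `P(τ ⊨ C₁ | A₁) ≥ p₁` (when `P(A₁) > 0`)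
and `P(τ ⊨ C₂ | ¬A₁) ≥ p₂` (when `P(A₁) < 1`), then the probability of satisfying the
weak merge `C₁ ⋈ C₂` is at least `p₁·P(A₁) + p₂·(1 − P(A₁))`. -/
theorem weak_merge_probability_decomposition
    {Trace : Type*} [MeasurableSpace Trace]
    (P : Measure Trace) [IsProbabilityMeasure P]
    (A₁ G₁ A₂ G₂ : Set Trace)
    (hA₁ : MeasurableSet A₁) (hG₁ : MeasurableSet G₁)
    (hA₂ : MeasurableSet A₂) (hG₂ : MeasurableSet G₂)
    (p₁ p₂ : ℝ) (hp₁ : p₁ ∈ Set.Icc (0:ℝ) 1) (hp₂ : p₂ ∈ Set.Icc (0:ℝ) 1)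
    (h₁ : P A₁ > 0 → p₁ ≤ (P[|A₁] {τ | τ ∈ A₁ → τ ∈ G₁}).toReal)
    (h₂ : P A₁ < 1 → p₂ ≤ (P[|A₁ᶜ] {τ | τ ∈ A₂ → τ ∈ G₂}).toReal) :
    p₁ * (P A₁).toReal + p₂ * (1 - (P A₁).toReal) ≤
      (P {τ | τ ∈ A₁ ∪ A₂ → τ ∈ G₁ ∪ G₂ ∪ (A₁ ∪ A₂)ᶜ}).toReal := by
  have hfin : ∀ s : Set Trace, P s ≠ ⊤ := fun s => measure_ne_top P s
  have hsat₁ : {τ : Trace | τ ∈ A₁ → τ ∈ G₁} = A₁ᶜ ∪ G₁ := by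
    ext τ; simp [imp_iff_not_or]
  have hsat₂ : {τ : Trace | τ ∈ A₂ → τ ∈ G₂} = A₂ᶜ ∪ G₂ := by
    ext τ; simp [imp_iff_not_or]
  have hSeq : {τ : Trace | τ ∈ A₁ ∪ A₂ → τ ∈ G₁ ∪ G₂ ∪ (A₁ ∪ A₂)ᶜ}
      = (A₁ ∪ A₂)ᶜ ∪ (G₁ ∪ G₂ ∪ (A₁ ∪ A₂)ᶜ) := by
    ext τ; simp [imp_iff_not_or]
  rw [hSeq]
  set S := (A₁ ∪ A₂)ᶜ ∪ (G₁ ∪ G₂ ∪ (A₁ ∪ A₂)ᶜ) with hSdef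
  have hSm : MeasurableSet S :=
    ((hA₁.union hA₂).compl).union ((hG₁.union hG₂).union (hA₁.union hA₂).compl)
  have hsub₁ : A₁ ∩ (A₁ᶜ ∪ G₁) ⊆ A₁ ∩ S := by
    rintro τ ⟨h1, h2⟩
    refine ⟨h1, ?_⟩
    rcases h2 with h | h
    · exact absurd h1 h
    · exact Or.inr (Or.inl (Or.inl h))
  have hsub₂ : A₁ᶜ ∩ (A₂ᶜ ∪ G₂) ⊆ A₁ᶜ ∩ S := by
    rintro τ ⟨h1, h2⟩
    refine ⟨h1, ?_⟩
    by_cases hτ : τ ∈ A₂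
    · rcases h2 with h | h
      · exact absurd hτ h
      · exact Or.inr (Or.inl (Or.inr h))
    · exact Or.inl (by simp [h1, hτ])
  have hdisj : Disjoint (A₁ ∩ S) (A₁ᶜ ∩ S) := by
    apply Set.disjoint_left.mpr
    rintro τ ⟨h1, _⟩ ⟨h2, _⟩
    exact h2 h1
  have hsum : P (A₁ ∩ S) + P (A₁ᶜ ∩ S) ≤ P S := by
    rw [← measure_union hdisj (hA₁.compl.inter hSm)]
    exact measure_mono (by rintro x (h | h) <;> exact h.2)
  -- compl measure
  have hc : (P A₁ᶜ).toReal = 1 - (P A₁).toReal := by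
    rw [measure_compl hA₁ (hfin A₁), measure_univ,
      ENNReal.toReal_sub_of_le prob_le_one ENNReal.one_ne_top, ENNReal.toReal_one]
  have key₁ : p₁ * (P A₁).toReal ≤ (P (A₁ ∩ (A₁ᶜ ∪ G₁))).toReal := by
    rcases eq_or_lt_of_le (zero_le : 0 ≤ P A₁) with h0 | hpos
    · simp [← h0]
    · have h := h₁ hpos
      rw [hsat₁, cond_apply hA₁, ENNReal.toReal_mul, ENNReal.toReal_inv] at h
      have ha : 0 < (P A₁).toReal := ENNReal.toReal_pos hpos.ne' (hfin A₁)
      have hinv : (P A₁).toReal⁻¹ * (P A₁).toReal = 1 := inv_mul_cancel₀ ha.ne'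
      nlinarith [ENNReal.toReal_nonneg (a := P (A₁ ∩ (A₁ᶜ ∪ G₁)))]
  have key₂ : p₂ * (1 - (P A₁).toReal) ≤ (P (A₁ᶜ ∩ (A₂ᶜ ∪ G₂))).toReal := by
    rcases eq_or_lt_of_le (zero_le : 0 ≤ P A₁ᶜ) with h0 | hpos
    · have : (1:ℝ) - (P A₁).toReal = 0 := by rw [← hc, ← h0]; simp
      rw [this]
      simp
    · have hlt : P A₁ < 1 := by
        refine lt_of_le_of_ne prob_le_one (fun h => ?_)
        have : P A₁ᶜ = 0 := by
          rw [measure_compl hA₁ (hfin A₁), measure_univ, h]; simp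
        rw [this] at hpos; exact lt_irrefl 0 hpos
      have h := h₂ hlt
      rw [hsat₂, cond_apply hA₁.compl, ENNReal.toReal_mul, ENNReal.toReal_inv] at h
      have ha : 0 < (P A₁ᶜ).toReal := ENNReal.toReal_pos hpos.ne' (hfin A₁ᶜ)
      have hinv : (P A₁ᶜ).toReal⁻¹ * (P A₁ᶜ).toReal = 1 := inv_mul_cancel₀ ha.ne'
      rw [← hc]
      nlinarith [ENNReal.toReal_nonneg (a := P (A₁ᶜ ∩ (A₂ᶜ ∪ G₂)))]
  have hm₁ : (P (A₁ ∩ (A₁ᶜ ∪ G₁))).toReal ≤ (P (A₁ ∩ S)).toReal :=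
    ENNReal.toReal_mono (hfin _) (measure_mono hsub₁)
  have hm₂ : (P (A₁ᶜ ∩ (A₂ᶜ ∪ G₂))).toReal ≤ (P (A₁ᶜ ∩ S)).toReal :=
    ENNReal.toReal_mono (hfin _) (measure_mono hsub₂)
  have hsum' : (P (A₁ ∩ S)).toReal + (P (A₁ᶜ ∩ S)).toReal ≤ (P S).toReal := by
    rw [← ENNReal.toReal_add (hfin _) (hfin _)]
    exact ENNReal.toReal_mono (hfin _) hsum
  linarith
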